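/- arXiv:2005.06951 — 2 statements merged into one kernel-verified Lean document; each statement's English description precedes it below -/
import Mathlib

section
/- Let α, β, η be real constants with β ≠ 0, η ≠ 0, α ≠ -1, and suppose (α+β+1)/β is not a nonpositive integer. Then for x > 0, the derivative with respect to x of F(x) = (x^{α+1} e^{η x^β} / (α+1)) · ₁F₁(1; (α+β+1)/β; -η x^β) equals x^α e^{η x^β}. That is, F is an antiderivative of x^α e^{η x^β} on (0, ∞). -/
noncomputable def poch (x : ℝ) (n : ℕ) : ℝ := ∏ i ∈ Finset.range n, (x + i)

noncomputable def oneFone (a b x : ℝ) : ℝ :=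
  ∑' n : ℕ, poch a n / poch b n * x ^ n / (n.factorial : ℝ)

lemma poch_zero (x : ℝ) : poch x 0 = 1 := by simp [poch]

lemma poch_succ (x : ℝ) (n : ℕ) : poch x (n+1) = poch x n * (x + n) := by
  simp [poch, Finset.prod_range_succ]

lemma poch_one (n : ℕ) : poch 1 n = n.factorial := by
  induction n with
  | zero => simp [poch]
  | succ n ih => rw [poch_succ, ih, Nat.factorial_succ]; push_cast; ring

lemma poch_ne_zero {b : ℝ} (hb : ∀ k : ℕ, b ≠ -(k : ℝ)) (n : ℕ) : poch b n ≠ 0 := by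
  unfold poch
  refine Finset.prod_ne_zero_iff.2 fun i _ => ?_
  intro h
  exact hb i (by linarith)

/-- helper summability via ratio test -/
lemma summable_helper {b : ℝ} (hb : ∀ k : ℕ, b ≠ -(k : ℝ)) (w : ℕ → ℝ)
    (hw : ∀ᶠ n in Filter.atTop, |w (n+1)| ≤ 2 * |w n|) (u : ℝ) :
    Summable (fun n => w n * u ^ n / poch b n) := by
  apply summable_of_ratio_norm_eventually_le (r := 1/2) (by norm_num)
  filter_upwards [hw, Filter.eventually_ge_atTop (max 1 ⌈4 * |u| + |b|⌉₊)] with n h1 h2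
  have hn1 : (1:ℕ) ≤ n := le_trans (le_max_left _ _) h2
  have hn2 : 4 * |u| + |b| ≤ n := by
    calc 4 * |u| + |b| ≤ ⌈4 * |u| + |b|⌉₊ := Nat.le_ceil _
    _ ≤ n := by exact_mod_cast le_trans (le_max_right _ _) h2
  have hbn : 4 * |u| ≤ |b + n| := by
    have : (n : ℝ) - |b| ≤ b + n := by
      have := neg_abs_le b; linarith
    calc 4*|u| ≤ (n:ℝ) - |b| := by linarith
    _ ≤ |b + n| := le_trans this (le_abs_self _)
  have hP := poch_ne_zero hb n
  have hbn0 : (0:ℝ) < |b + n| := abs_pos.2 (fun h => hb n (by linarith))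
  have hP0 : (0:ℝ) < |poch b n| := abs_pos.2 hP
  simp only [Real.norm_eq_abs, poch_succ, pow_succ, abs_div, abs_mul, abs_pow]
  rw [← mul_div_assoc]
  rw [div_le_div_iff₀ (by positivity) hP0]
  calc |w (n+1)| * (|u|^n * |u|) * |poch b n|
      ≤ (2 * |w n|) * (|u|^n * |u|) * |poch b n| := by gcongr <;> positivity
    _ = (|w n| * |u|^n * |poch b n|) * (2 * |u|) := by ring
    _ ≤ (|w n| * |u|^n * |poch b n|) * (|b + n| / 2) := by
        gcongr
        linarith
    _ = 1/2 * (|w n| * |u|^n) * (|poch b n| * |b + n|) := by ring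

lemma summable_g {b : ℝ} (hb : ∀ k : ℕ, b ≠ -(k : ℝ)) (u : ℝ) :
    Summable (fun n : ℕ => u ^ n / poch b n) := by
  have := summable_helper hb (fun _ => 1) (by filter_upwards with n; norm_num) u
  simpa using this

lemma summable_ng {b : ℝ} (hb : ∀ k : ℕ, b ≠ -(k : ℝ)) (u : ℝ) :
    Summable (fun n : ℕ => (n : ℝ) * u ^ n / poch b n) := by
  refine summable_helper hb (fun n => (n : ℝ)) ?_ u
  filter_upwards [Filter.eventually_ge_atTop 1] with n hn
  rw [abs_of_nonneg (by positivity), abs_of_nonneg (by positivity)]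
  push_cast
  have : (1:ℝ) ≤ n := by exact_mod_cast hn
  linarith

noncomputable def gfun (b : ℝ) (u : ℝ) : ℝ := ∑' n : ℕ, u ^ n / poch b n

lemma hasDerivAt_gfun {b : ℝ} (hb : ∀ k : ℕ, b ≠ -(k : ℝ)) (u : ℝ) :
    HasDerivAt (gfun b) (∑' n : ℕ, (n : ℝ) * u ^ (n-1) / poch b n) u := by
  obtain ⟨R, hR0, huR⟩ : ∃ R : ℝ, 0 < R ∧ |u| < R := ⟨|u|+1, by positivity, by linarith⟩
  have hw : ∀ᶠ n : ℕ in Filter.atTop, |((n:ℝ)+1) / R| ≤ 2 * |(n:ℝ) / R| := by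
    filter_upwards [Filter.eventually_ge_atTop 1] with n hn
    have h1 : (1:ℝ) ≤ n := by exact_mod_cast hn
    rw [abs_div, abs_div, abs_of_nonneg (by linarith : (0:ℝ) ≤ (n:ℝ)+1),
      abs_of_nonneg (by linarith : (0:ℝ) ≤ (n:ℝ)), abs_of_pos hR0,
      div_le_iff₀ hR0, mul_assoc, div_mul_cancel₀ _ hR0.ne']
    linarith
  have hsum : Summable (fun n : ℕ => (n : ℝ) * R ^ (n-1) / |poch b n|) := by
    have h := (summable_helper hb (fun n => (n : ℝ) / R) (by
      filter_upwards [hw] with n hn; push_cast; exact hn) R).abs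
    refine h.congr fun n => ?_
    rcases n with _ | m
    · simp
    · have h1 : ((m+1:ℕ):ℝ)/R * R^(m+1) = ((m+1:ℕ):ℝ) * R^m := by
        rw [pow_succ]; field_simp
      rw [abs_div, abs_of_nonneg
        (mul_nonneg (div_nonneg (Nat.cast_nonneg _) hR0.le) (pow_nonneg hR0.le _)),
        h1, Nat.succ_sub_one]
  refine hasDerivAt_tsum_of_isPreconnected hsum Metric.isOpen_ball
    (convex_ball (0:ℝ) R).isPreconnected
    (g := fun n y => y ^ n / poch b n) (g' := fun n y => (n:ℝ) * y ^ (n-1) / poch b n)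
    (fun n y _ => (hasDerivAt_pow n y).div_const (poch b n)) (fun n y hy => ?_)
    (y₀ := 0) ?_ ?_ ?_
  · rw [Metric.mem_ball, Real.dist_eq, sub_zero] at hy
    rw [Real.norm_eq_abs, abs_div, abs_mul, abs_pow, Nat.abs_cast]
    gcongr
  · simpa using hR0
  · apply summable_of_ne_finset_zero (s := {0})
    intro n hn
    simp only [Finset.mem_singleton] at hn
    simp [zero_pow hn]
  · rw [Metric.mem_ball, Real.dist_eq, sub_zero]
    exact huR

lemma gfun_identity {b : ℝ} (hb : ∀ k : ℕ, b ≠ -(k:ℝ)) (u : ℝ) :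
    (b-1) * gfun b u + u * (∑' n : ℕ, (n:ℝ) * u^(n-1)/poch b n) - u * gfun b u = b - 1 := by
  have hP : ∀ n, poch b n ≠ 0 := poch_ne_zero hb
  have hS := summable_g hb u
  have hSn := summable_ng hb u
  have hf : Summable (fun n : ℕ => (b-1+n) * u^n / poch b n) := by
    refine ((hS.mul_left (b-1)).add hSn).congr fun n => ?_
    field_simp
  have h1 : u * (∑' n : ℕ, (n:ℝ) * u^(n-1)/poch b n) = ∑' n : ℕ, (n:ℝ) * u^n/poch b n := by
    rw [← tsum_mul_left]
    refine tsum_congr fun n => ?_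
    rcases n with _ | m
    · simp
    · rw [Nat.succ_sub_one, pow_succ]
      push_cast; ring
  have h2 : (b-1) * gfun b u + u * (∑' n : ℕ, (n:ℝ)*u^(n-1)/poch b n)
      = ∑' n : ℕ, (b-1+n)*u^n/poch b n := by
    rw [h1, gfun, ← tsum_mul_left, ← Summable.tsum_add (hS.mul_left (b-1)) hSn]
    refine tsum_congr fun n => ?_
    field_simp
  have h3 : ∑' n : ℕ, (b-1+n)*u^n/poch b n = (b-1) + u * gfun b u := by
    rw [Summable.tsum_eq_zero_add hf]
    congr 1
    · simp [poch_zero]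
    · rw [gfun, ← tsum_mul_left]
      refine tsum_congr fun n => ?_
      have hbn : b + n ≠ 0 := fun h => hb n (by linarith)
      rw [poch_succ, pow_succ]
      push_cast
      rw [show b - 1 + ((n:ℝ) + 1) = b + n by ring, mul_comm (poch b n) (b + (n:ℝ)),
        mul_div_mul_left _ _ hbn, mul_comm (u^n) u, mul_div_assoc]
  rw [h2, h3]; ring

lemma oneFone_eq (b u : ℝ) : oneFone 1 b u = gfun b u := by
  unfold oneFone gfun
  refine tsum_congr fun n => ?_
  rw [poch_one]
  have hf : (n.factorial : ℝ) ≠ 0 := Nat.cast_ne_zero.2 n.factorial_ne_zero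
  rcases eq_or_ne (poch b n) 0 with h | h
  · simp [h]
  · field_simp

theorem stmt_3 (α β η : ℝ) (hβ : β ≠ 0) (hη : η ≠ 0) (hα : α ≠ -1)
    (hb : ∀ k : ℕ, (α + β + 1) / β ≠ -(k : ℝ)) :
    ∀ x : ℝ, 0 < x →
      HasDerivAt
        (fun y : ℝ =>
          y ^ (α + 1) * Real.exp (η * y ^ β) / (α + 1) *
            oneFone 1 ((α + β + 1) / β) (-(η * y ^ β)))
        (x ^ α * Real.exp (η * x ^ β)) x := by
  intro x hx
  set b := (α+β+1)/β with hbdef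
  have ha1 : α + 1 ≠ 0 := fun h => hα (by linarith)
  have hb1 : β * (b - 1) = α + 1 := by rw [hbdef]; field_simp; ring
  have hxne : x ≠ 0 := hx.ne'
  have h2 : HasDerivAt (fun y : ℝ => y ^ β) (β * x ^ (β-1)) x :=
    Real.hasDerivAt_rpow_const (Or.inl hxne)
  have h1 : HasDerivAt (fun y : ℝ => y ^ (α+1)) ((α+1) * x ^ α) x := by
    have := Real.hasDerivAt_rpow_const (p := α+1) (Or.inl hxne)
    simpa using this
  have h3 : HasDerivAt (fun y : ℝ => Real.exp (η * y ^ β))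
      (Real.exp (η * x ^ β) * (η * (β * x ^ (β-1)))) x := (h2.const_mul η).exp
  have h5 : HasDerivAt (fun y : ℝ => -(η * y ^ β)) (-(η * (β * x ^ (β-1)))) x :=
    (h2.const_mul η).neg
  have hg : HasDerivAt (gfun b) (∑' n : ℕ, (n:ℝ) * (-(η * x ^ β))^(n-1)/poch b n)
      (-(η * x ^ β)) := hasDerivAt_gfun hb _
  have h6 : HasDerivAt (fun y : ℝ => gfun b (-(η * y ^ β)))
      ((∑' n : ℕ, (n:ℝ) * (-(η * x ^ β))^(n-1)/poch b n) * -(η * (β * x ^ (β-1)))) x :=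
    by have := hg.comp x h5; exact this
  have h4 := ((h1.mul h3).div_const (α+1)).mul h6
  have hfun : (fun y : ℝ => y ^ (α + 1) * Real.exp (η * y ^ β) / (α + 1) *
      oneFone 1 b (-(η * y ^ β)))
      = fun y => y ^ (α+1) * Real.exp (η*y^β)/(α+1) * gfun b (-(η*y^β)) := by
    funext y; rw [oneFone_eq]
  rw [hfun]
  refine h4.congr_deriv ?_
  symm
  simp only [Pi.mul_apply]
  have key := gfun_identity hb (-(η * x ^ β))
  set D := ∑' n : ℕ, (n:ℝ) * (-(η * x ^ β))^(n-1)/poch b n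
  set G := gfun b (-(η * x ^ β))
  have key2 : (α+1)*G - β*(-(η * x ^ β))*G + β*(-(η * x ^ β))*D = α+1 := by
    linear_combination β * key - (G - 1) * hb1
  set E := Real.exp (η * x ^ β)
  have hxa : x ^ (α+1) = x ^ α * x := Real.rpow_add_one hxne α
  have hxb : x ^ (β-1) = x ^ β / x := by
    rw [eq_div_iff hxne, ← Real.rpow_add_one hxne, sub_add_cancel]
  rw [hxa, hxb]
  field_simp
  linear_combination (-E) * key2
end

section
/- Let β > 0 (with β such that t ↦ t^β is defined for t ≥ 0, applied to |x-θ|), η > 0, σ > 0, θ ∈ ℝ, and n a natural number. For the density f(x) = (β/(2σ)) · (η^{1/β}/Γ(1/β)) · exp(-η(|x-θ|/σ)^β) on ℝ, the n-th moment is ∫_ℝ x^n f(x) dx = (θ^n/Γ(1/β)) · Σ_{l=0}^{⌊n/2⌋} Γ((2l+1)/β) · C(n, 2l) · (σ/(θ η^{1/β}))^{2l}, where C(n,k) is the binomial coefficient, assuming θ ≠ 0. -/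
open MeasureTheory Real Set

private lemma aux_intOn1 {p s : ℝ} (hp : 0 < p) (hs : -1 < s) :
    IntegrableOn (fun x : ℝ => x ^ s * Real.exp (-x ^ p)) (Ioi 0) := by
  have h0 : 0 < (s + 1) / p := div_pos (by linarith) hp
  have hG := Real.GammaIntegral_convergent h0
  have h2 := (integrableOn_Ioi_comp_rpow_iff
    (fun y : ℝ => Real.exp (-y) * y ^ ((s + 1) / p - 1)) hp.ne').mpr hG
  have h3 : IntegrableOn (fun x : ℝ =>
      (1 / p) * ((|p| * x ^ (p - 1)) • (Real.exp (-x ^ p) * (x ^ p) ^ ((s + 1) / p - 1))))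
      (Ioi 0) := h2.const_mul (1 / p)
  refine h3.congr_fun (fun x hx => ?_) measurableSet_Ioi
  have hx' : (0:ℝ) < x := hx
  simp only [smul_eq_mul]; rw [← Real.rpow_mul hx'.le p ((s + 1) / p - 1)]
  have h4 : p * ((s + 1) / p - 1) = s + 1 - p := by field_simp
  rw [h4, abs_of_pos hp]
  rw [show (1 / p) * (p * x ^ (p - 1) * (Real.exp (-x ^ p) * x ^ (s + 1 - p)))
      = (1/p * p) * (x ^ (p-1) * x ^ (s+1-p)) * Real.exp (-x^p) by ring,
    ← Real.rpow_add hx', one_div_mul_cancel hp.ne', one_mul]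
  norm_num

private lemma aux_intOn {p s b : ℝ} (hp : 0 < p) (hs : -1 < s) (hb : 0 < b) :
    IntegrableOn (fun x : ℝ => x ^ s * Real.exp (-b * x ^ p)) (Ioi 0) := by
  have hib : 0 < b ^ (-p⁻¹) := rpow_pos_of_pos hb _
  suffices h : IntegrableOn (fun x : ℝ ↦ (b ^ (-p⁻¹)) ^ s * (x ^ s * Real.exp (-x ^ p))) (Ioi 0) by
    rw [show (0:ℝ) = b ^ (-p⁻¹) * 0 by rw [mul_zero], ← integrableOn_Ioi_comp_mul_left_iff _ _ hib]
    refine h.congr_fun (fun x hx => ?_) measurableSet_Ioi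
    have hx' : (0:ℝ) < x := hx
    have e1 : (b ^ (-p⁻¹) * x) ^ s = (b ^ (-p⁻¹)) ^ s * x ^ s := mul_rpow hib.le hx'.le
    have e2 : (b ^ (-p⁻¹) * x) ^ p = b⁻¹ * x ^ p := by
      rw [mul_rpow hib.le hx'.le, ← Real.rpow_mul hb.le, neg_mul,
        inv_mul_cancel₀ hp.ne', Real.rpow_neg_one]
    simp only [e1, e2]
    rw [show -b * (b⁻¹ * x ^ p) = -((b * b⁻¹) * x ^ p) by ring, mul_inv_cancel₀ hb.ne', one_mul]
    ring
  have h5 : IntegrableOn (fun x : ℝ =>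
      (b ^ (-p⁻¹)) ^ s * (x ^ s * Real.exp (-x ^ p))) (Ioi 0) :=
    (aux_intOn1 hp hs).const_mul _
  exact h5

private lemma integrable_abs_comp {g : ℝ → ℝ} (hg : IntegrableOn g (Ioi 0)) :
    Integrable (fun x : ℝ => g |x|) := by
  have int_Ioi : IntegrableOn (fun x : ℝ => g |x|) (Ioi 0) :=
    hg.congr_fun (fun x hx => by rw [abs_of_pos hx]) measurableSet_Ioi
  have int_Iic : IntegrableOn (fun x : ℝ ↦ g |x|) (Iic 0) := by
    rw [← Measure.map_neg_eq_self (volume : Measure ℝ)]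
    have m : MeasurableEmbedding fun x : ℝ => -x := (Homeomorph.neg ℝ).measurableEmbedding
    rw [m.integrableOn_map_iff]
    simp_rw [Function.comp_def, abs_neg, neg_preimage, neg_Iic, neg_zero]
    exact (integrableOn_Ici_iff_integrableOn_Ioi enorm_ne_top).mpr int_Ioi
  have h := int_Iic.union int_Ioi
  rwa [Iic_union_Ioi, integrableOn_univ] at h

private lemma integrable_pow_exp {b p : ℝ} (hb : 0 < b) (hp : 0 < p) (k : ℕ) :
    Integrable (fun x : ℝ => x ^ k * Real.exp (-b * |x| ^ p)) := by
  have hk : (-1:ℝ) < (k:ℝ) := lt_of_lt_of_le neg_one_lt_zero (Nat.cast_nonneg k)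
  have h1 : IntegrableOn (fun t : ℝ => t ^ (k:ℝ) * Real.exp (-b * t ^ p)) (Ioi 0) :=
    aux_intOn hp hk hb
  have h2 : Integrable (fun x : ℝ => |x| ^ ((k:ℝ)) * Real.exp (-b * |x| ^ p)) :=
    integrable_abs_comp h1
  refine h2.mono' ?_ (Filter.Eventually.of_forall fun x => ?_)
  · apply Continuous.aestronglyMeasurable
    exact (continuous_pow k).mul
      ((continuous_const.mul (continuous_abs.rpow_const fun x => Or.inr hp.le)).rexp)
  · rw [Real.norm_eq_abs, abs_mul, abs_pow, Real.abs_exp, Real.rpow_natCast]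

private lemma integral_odd_zero {f : ℝ → ℝ} (h : ∀ x, f (-x) = -f x) : ∫ x, f x = 0 := by
  have h1 : ∫ x, f (-x) = ∫ x, f x := integral_neg_eq_self f volume
  have h2 : ∫ x, f (-x) = -∫ x, f x := by
    simp_rw [h]; exact integral_neg f
  linarith [h1, h2]

private lemma sum_even (n : ℕ) (g : ℕ → ℝ) (h : ∀ k, k % 2 = 1 → g k = 0) :
    ∑ k ∈ Finset.range (n+1), g k = ∑ l ∈ Finset.range (n/2+1), g (2*l) := by
  rw [← Finset.sum_filter_of_ne (p := fun k => k % 2 = 0)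
    (fun k _ hk => by by_contra hc; exact hk (h k (by omega)))]
  refine Finset.sum_nbij' (fun k => k / 2) (fun l => 2 * l) ?_ ?_ ?_ ?_ ?_
  · intro a ha; simp only [Finset.mem_filter, Finset.mem_range] at ha ⊢; omega
  · intro a ha; simp only [Finset.mem_filter, Finset.mem_range] at ha ⊢; omega
  · intro a ha; simp only [Finset.mem_filter, Finset.mem_range] at ha; omega
  · intro a ha; simp only [Finset.mem_range] at ha; omega
  · intro a ha; simp only [Finset.mem_filter, Finset.mem_range] at ha
    congr 1; omega

theorem stmt_18 (β η σ θ : ℝ) (hβ : 0 < β) (hη : 0 < η) (hσ : 0 < σ) (hθ : θ ≠ 0)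
    (n : ℕ)
    (f : ℝ → ℝ)
    (hf : f = fun x : ℝ =>
      β / (2 * σ) * (η ^ (1 / β) / Real.Gamma (1 / β)) *
        Real.exp (-η * (|x - θ| / σ) ^ β)) :
    ∫ x : ℝ, x ^ n * f x =
      θ ^ n / Real.Gamma (1 / β) *
        ∑ l ∈ Finset.range (n / 2 + 1),
          Real.Gamma ((2 * l + 1) / β) * (n.choose (2 * l) : ℝ) *
            (σ / (θ * η ^ (1 / β))) ^ (2 * l) := by
  set c : ℝ := β / (2 * σ) * (η ^ (1 / β) / Real.Gamma (1 / β)) with hc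
  set b : ℝ := η / σ ^ β with hbdef
  have hsb : (0:ℝ) < σ ^ β := Real.rpow_pos_of_pos hσ β
  have hb : 0 < b := by rw [hbdef]; positivity
  have key : ∀ x : ℝ, -η * (|x - θ| / σ) ^ β = -b * |x - θ| ^ β := by
    intro x
    rw [Real.div_rpow (abs_nonneg _) hσ.le, hbdef]
    ring
  have hE : ∀ k : ℕ, Integrable (fun y : ℝ => y ^ k * Real.exp (-b * |y| ^ β)) :=
    fun k => integrable_pow_exp hb hβ k
  have Meven : ∀ l : ℕ, ∫ y : ℝ, y ^ (2*l) * Real.exp (-b * |y| ^ β)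
      = 2 * (b ^ (-(((2*l : ℕ):ℝ) + 1) / β) * (1/β) * Real.Gamma ((((2*l:ℕ):ℝ) + 1) / β)) := by
    intro l
    have e1 : (fun y : ℝ => y ^ (2*l) * Real.exp (-b * |y| ^ β))
        = fun y : ℝ => (fun t : ℝ => t ^ (2*l) * Real.exp (-b * t ^ β)) |y| := by
      funext y
      simp only
      rw [← abs_pow, abs_of_nonneg (Even.pow_nonneg (even_two_mul l) y)]
    rw [e1, integral_comp_abs (f := fun t : ℝ => t ^ (2*l) * Real.exp (-b * t ^ β))]
    have e2 : ∫ t in Ioi (0:ℝ), t ^ (2*l) * Real.exp (-b * t ^ β)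
        = ∫ t in Ioi (0:ℝ), t ^ (((2*l:ℕ)):ℝ) * Real.exp (-b * t ^ β) := by
      refine setIntegral_congr_fun measurableSet_Ioi (fun t ht => ?_)
      rw [Real.rpow_natCast]
    have hql : (-1:ℝ) < ((2*l:ℕ):ℝ) := lt_of_lt_of_le neg_one_lt_zero (Nat.cast_nonneg _)
    rw [e2, integral_rpow_mul_exp_neg_mul_rpow hβ hql hb]
  have Modd : ∀ k : ℕ, k % 2 = 1 → (∫ y : ℝ, y ^ k * Real.exp (-b * |y| ^ β)) = 0 := by
    intro k hk
    refine integral_odd_zero (fun y => ?_)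
    have hok : Odd k := Nat.odd_iff.mpr hk
    rw [abs_neg, hok.neg_pow]
    ring
  calc ∫ x : ℝ, x ^ n * f x
      = c * ∫ x : ℝ, x ^ n * Real.exp (-b * |x - θ| ^ β) := by
        rw [← integral_const_mul]
        congr 1; funext x
        rw [hf]; simp only
        rw [key x]; ring
    _ = c * ∫ y : ℝ, (y + θ) ^ n * Real.exp (-b * |y| ^ β) := by
        congr 1
        rw [← integral_add_right_eq_self (fun x : ℝ => x ^ n * Real.exp (-b * |x - θ| ^ β)) θ]
        congr 1; funext y
        simp [add_sub_cancel_right]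
    _ = c * ∑ k ∈ Finset.range (n+1),
          θ ^ (n-k) * (n.choose k : ℝ) * ∫ y : ℝ, y ^ k * Real.exp (-b * |y| ^ β) := by
        congr 1
        have e3 : (fun y : ℝ => (y + θ) ^ n * Real.exp (-b * |y| ^ β))
            = fun y : ℝ => ∑ k ∈ Finset.range (n+1),
                θ ^ (n-k) * (n.choose k : ℝ) * (y ^ k * Real.exp (-b * |y| ^ β)) := by
          funext y
          rw [add_pow, Finset.sum_mul]
          exact Finset.sum_congr rfl (fun k _ => by ring)
        rw [e3, integral_finset_sum _ (fun k _ => ((hE k).const_mul _))]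
        exact Finset.sum_congr rfl (fun k _ => by rw [integral_const_mul, mul_assoc])
    _ = c * ∑ l ∈ Finset.range (n/2+1),
          θ ^ (n-2*l) * (n.choose (2*l) : ℝ) *
            (2 * (b ^ (-(((2*l : ℕ):ℝ) + 1) / β) * (1/β) * Real.Gamma ((((2*l:ℕ):ℝ) + 1) / β))) := by
        congr 1
        rw [sum_even n _ (fun k hk => by rw [Modd k hk, mul_zero])]
        exact Finset.sum_congr rfl (fun l _ => by rw [Meven l])
    _ = θ ^ n / Real.Gamma (1 / β) *
        ∑ l ∈ Finset.range (n / 2 + 1),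
          Real.Gamma ((2 * l + 1) / β) * (n.choose (2 * l) : ℝ) *
            (σ / (θ * η ^ (1 / β))) ^ (2 * l) := by
        rw [Finset.mul_sum, Finset.mul_sum]
        refine Finset.sum_congr rfl (fun l hl => ?_)
        have hln : 2 * l ≤ n := by
          simp only [Finset.mem_range] at hl; omega
        have hG0 : (0:ℝ) < Real.Gamma (1/β) := Real.Gamma_pos_of_pos (by positivity)
        have hA0 : (0:ℝ) < η ^ (1/β) := Real.rpow_pos_of_pos hη _
        have hP0 : (0:ℝ) < η ^ ((2*(l:ℝ))/β) := Real.rpow_pos_of_pos hη _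
        have hth : θ ^ (2*l) ≠ 0 := pow_ne_zero _ hθ
        have hcast : (((2*l : ℕ):ℝ)) = 2*(l:ℝ) := by push_cast; ring
        have hbpow : b ^ (-(((2*l : ℕ):ℝ) + 1) / β)
            = σ ^ (2*l+1 : ℕ) * ((η ^ ((2*(l:ℝ))/β))⁻¹ * (η ^ (1/β))⁻¹) := by
          rw [hcast, hbdef, Real.div_rpow hη.le hsb.le, ← Real.rpow_mul hσ.le]
          have e4 : β * (-(2*(l:ℝ) + 1) / β) = -(2*(l:ℝ)+1) := by field_simp
          rw [e4, Real.rpow_neg hσ.le]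
          have e5 : σ ^ (2*(l:ℝ)+1) = σ ^ (2*l+1 : ℕ) := by
            rw [← Real.rpow_natCast σ (2*l+1)]; congr 1; push_cast; ring
          have e6 : η ^ (-(2*(l:ℝ) + 1) / β)
              = (η ^ ((2*(l:ℝ))/β))⁻¹ * (η ^ (1/β))⁻¹ := by
            rw [show -(2*(l:ℝ) + 1) / β = -((2*(l:ℝ))/β) + -(1/β) by ring,
              Real.rpow_add hη, Real.rpow_neg hη.le, Real.rpow_neg hη.le]
          rw [e5, e6]
          field_simp
        have hA : (η ^ (1/β)) ^ (2*l : ℕ) = η ^ ((2*(l:ℝ))/β) := by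
          rw [← Real.rpow_natCast (η ^ (1/β)) (2*l), ← Real.rpow_mul hη.le]
          congr 1; push_cast; field_simp
        have hθn : θ ^ n = θ ^ (n-2*l) * θ ^ (2*l) := by
          rw [← pow_add]; congr 1; omega
        rw [hbpow, hcast, hθn, div_pow, mul_pow, hA, hc]
        field_simp
        ring
end
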